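/- Let G be a d-regular graph (d ≥ 3) with girth c, and S ≥ 0 with 2S+1 < c. Setting ξ_i to be the uniform probability measure on B(i,S), for every edge ij one has ‖ξ_i − ξ_j‖_1 = 2(d−1)^S(2−d)/(2 − d(d−1)^S). Consequently the minimal variation ε_{S,G} of probability measures supported at scale S satisfies ε_{S,G} ≤ 2(d−1)^S(d−2)/(d(d−1)^S − 2). -/

import Mathlib

open scoped Classical

namespace Stmt12Aux

open SimpleGraph Finset Walk

variable {V : Type*} {G : SimpleGraph V}

/-- Along a path, we can find a prefix ending at the first vertex satisfying `L`. -/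
lemma exists_prefix_until {x b : V} (p : G.Walk x b) :
    p.IsPath → ∀ L : V → Prop, L b →
    ∃ (c : V) (r : G.Walk x c), r.IsPath ∧ r.length ≤ p.length ∧ L c ∧
      (∀ v ∈ r.support, L v → v = c) ∧ ∀ v ∈ r.support, v ∈ p.support := by
  induction p with
  | nil =>
    intro hp L hb
    exact ⟨_, Walk.nil, Walk.IsPath.nil, le_rfl, hb, by simp, by simp⟩
  | @cons u v w hadj q ih =>
    intro hp L hb
    by_cases hL : L u
    · exact ⟨u, Walk.nil, Walk.IsPath.nil, Nat.zero_le _, hL, by simp, by simp⟩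
    · obtain ⟨c, r, hr, hlen, hLc, honly, hsub⟩ := ih hp.of_cons L hb
      refine ⟨c, Walk.cons hadj r, ?_, ?_, hLc, ?_, ?_⟩
      · rw [Walk.cons_isPath_iff] at hp ⊢
        exact ⟨hr, fun hu => hp.2 (hsub _ hu)⟩
      · simpa using Nat.succ_le_succ hlen
      · intro z hz hLz
        rw [Walk.support_cons, List.mem_cons] at hz
        rcases hz with rfl | hz
        · exact absurd hLz hL
        · exact honly z hz hLz
      · intro z hz
        rw [Walk.support_cons, List.mem_cons] at hz
        rw [Walk.support_cons, List.mem_cons]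
        rcases hz with rfl | hz
        · exact Or.inl rfl
        · exact Or.inr (hsub z hz)

lemma isPath_concat {u v w : V} {p : G.Walk u v} (hp : p.IsPath) (h : G.Adj v w)
    (hw : w ∉ p.support) : (p.concat h).IsPath := by
  rw [Walk.concat_eq_append]
  rw [Walk.isPath_def, Walk.support_append]
  rw [Walk.isPath_def] at hp
  simp only [Walk.support_cons, Walk.support_nil, List.tail_cons]
  rw [List.nodup_append]
  exact ⟨hp, List.nodup_singleton w, by rintro a ha b hb rfl; simp at hb; subst hb; exact hw ha⟩

/-- Two distinct paths between the same endpoints yield a cycle of length at most the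
sum of their lengths. -/
lemma cycle_of_two_paths_aux :
    ∀ (n : ℕ) {a b : V} (p q : G.Walk a b), p.length + q.length ≤ n →
      p.IsPath → q.IsPath → p ≠ q →
      ∃ (c : V) (w : G.Walk c c), w.IsCycle ∧ w.length ≤ p.length + q.length := by
  intro n
  induction n using Nat.strong_induction_on with
  | _ n ih =>
    intro a b p q hn hp hq hne
    cases p with
    | nil =>
      rw [Walk.isPath_iff_eq_nil] at hq
      exact absurd hq.symm hne
    | @cons _ x _ hax p' =>
      cases q with
      | nil =>
        rw [Walk.isPath_iff_eq_nil] at hp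
        exact absurd hp hne
      | @cons _ y _ hay q' =>
        rw [Walk.cons_isPath_iff] at hp hq
        by_cases hxy : x = y
        · subst hxy
          have hne' : p' ≠ q' := by rintro rfl; exact hne rfl
          have hlt : p'.length + q'.length < n := by
            simp only [Walk.length_cons] at hn; omega
          obtain ⟨c, w, hw, hwl⟩ := ih _ hlt p' q' le_rfl hp.1 hq.1 hne'
          exact ⟨c, w, hw, by simp only [Walk.length_cons]; omega⟩
        · -- paths diverge immediately; build a cycle through `a`
          obtain ⟨c, r1, hr1, hr1len, hc, honly, hsub⟩ :=
            exists_prefix_until p' hp.1 (fun v => v ∈ q'.support) q'.end_mem_support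
          have hr2 : (q'.takeUntil c hc).IsPath := hq.1.takeUntil hc
          have hr2len := q'.length_takeUntil_le hc
          set r2 : G.Walk y c := q'.takeUntil c hc with hr2def
          have hr2sub : ∀ v ∈ r2.support, v ∈ q'.support := fun v hv =>
            q'.support_takeUntil_subset hc hv
          -- the reversed second prefix
          have hrrpath : r2.reverse.IsPath := hr2.reverse
          -- T : Walk x y
          set T : G.Walk x y := r1.append r2.reverse with hTdef
          have haT : a ∉ T.support := by
            intro hmem
            rw [Walk.mem_support_append_iff] at hmem
            rcases hmem with hmem | hmem
            · exact hp.2 (hsub _ hmem)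
            · rw [Walk.support_reverse, List.mem_reverse] at hmem
              exact hq.2 (hr2sub _ hmem)
          have hTpath : T.IsPath := by
            rw [Walk.isPath_def, Walk.support_append, List.nodup_append]
            refine ⟨hr1.support_nodup, ?_, ?_⟩
            · have := hrrpath.support_nodup
              rw [Walk.support_eq_cons] at this
              exact this.of_cons
            · intro z hz z' hz' hzz'
              subst hzz'
              have hzc : z ≠ c := by
                intro rfl_z; subst rfl_z
                have := hrrpath.support_nodup
                rw [Walk.support_eq_cons] at this
                rw [List.nodup_cons] at this
                exact this.1 hz'
              have hzq : z ∈ q'.support := by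
                apply hr2sub
                rw [← List.mem_reverse, ← Walk.support_reverse]
                exact List.mem_of_mem_tail hz'
              exact hzc (honly z hz hzq)
          have hya : G.Adj y a := hay.symm
          have hP : (T.concat hya).IsPath := isPath_concat hTpath hya haT
          have hedge : s(a, x) ∉ (T.concat hya).edges := by
            rw [Walk.edges_concat]
            intro hmem
            rw [List.concat_eq_append] at hmem
            rcases List.mem_append.mp hmem with hmem | hmem
            · exact haT (T.fst_mem_support_of_mem_edges hmem)
            · rw [List.mem_singleton, Sym2.eq_iff] at hmem
              rcases hmem with ⟨rfl, rfl⟩ | ⟨h1, h2⟩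
              · exact G.irrefl hay
              · exact hxy h2
          refine ⟨a, Walk.cons hax (T.concat hya), ?_, ?_⟩
          · rw [Walk.cons_isCycle_iff]
            exact ⟨hP, hedge⟩
          · have hTlen : T.length = r1.length + r2.length := by
              simp [hTdef]
            simp only [Walk.length_cons, Walk.length_concat]
            omega

lemma cycle_of_two_paths {a b : V} {p q : G.Walk a b}
    (hp : p.IsPath) (hq : q.IsPath) (hne : p ≠ q) :
    ∃ (c : V) (w : G.Walk c c), w.IsCycle ∧ w.length ≤ p.length + q.length :=
  cycle_of_two_paths_aux _ p q le_rfl hp hq hne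

section B
variable {V : Type*} {G : SimpleGraph V} {S : ℕ}

lemma exists_path_length_dist {i u : V} (h : G.Reachable i u) :
    ∃ p : G.Walk i u, p.IsPath ∧ p.length = G.dist i u := by
  obtain ⟨p, hp⟩ := h.exists_walk_length_eq_dist
  refine ⟨p.bypass, p.bypass_isPath, le_antisymm ?_ (SimpleGraph.dist_le _)⟩
  calc p.bypass.length ≤ p.length := p.length_bypass_le
  _ = G.dist i u := hp

lemma dist_step {i u w : V} (hr : G.Reachable i u) (h : G.Adj u w) :
    G.dist i w ≤ G.dist i u + 1 := by
  obtain ⟨p, hp⟩ := hr.exists_walk_length_eq_dist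
  have := SimpleGraph.dist_le (p.concat h)
  rwa [Walk.length_concat, hp] at this

lemma dist_tri {j i u : V} (h1 : G.Reachable j i) (h2 : G.Reachable i u) :
    G.dist j u ≤ G.dist j i + G.dist i u := by
  obtain ⟨p, hp⟩ := h1.exists_walk_length_eq_dist
  obtain ⟨q, hq⟩ := h2.exists_walk_length_eq_dist
  have := SimpleGraph.dist_le (p.append q)
  rwa [Walk.length_append, hp, hq] at this

variable (hcyc : ∀ ⦃c : V⦄ (w : G.Walk c c), w.IsCycle → 2 * S + 1 < w.length)

include hcyc in
lemma path_eq_of_short {a b : V} {p q : G.Walk a b} (hp : p.IsPath) (hq : q.IsPath)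
    (hlen : p.length + q.length ≤ 2 * S + 1) : p = q := by
  by_contra hne
  obtain ⟨c, w, hw, hwl⟩ := cycle_of_two_paths hp hq hne
  exact absurd (hwl.trans hlen) (not_le.mpr (hcyc w hw))

lemma parent_exists {i u : V} {k : ℕ} (hr : G.Reachable i u) (hk : G.dist i u = k + 1) :
    ∃ w, G.Adj w u ∧ G.Reachable i w ∧ G.dist i w = k := by
  obtain ⟨p, hp, hpl⟩ := exists_path_length_dist hr
  cases hq : p.reverse with
  | nil =>
    have : p.reverse.length = 0 := by rw [hq]; rfl
    rw [Walk.length_reverse, hpl, hk] at this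
    omega
  | @cons _ w _ hadj q =>
    have hlen : q.length = k := by
      have : p.reverse.length = k + 1 := by rw [Walk.length_reverse, hpl, hk]
      rw [hq, Walk.length_cons] at this
      omega
    refine ⟨w, hadj.symm, q.reverse.reachable, le_antisymm ?_ ?_⟩
    · have := SimpleGraph.dist_le q.reverse
      rwa [Walk.length_reverse, hlen] at this
    · have h2 := dist_step (q.reverse.reachable) hadj.symm
      omega

include hcyc in
lemma parent_unique {i u w1 w2 : V} {k : ℕ} (hk1 : k + 1 ≤ S)
    (hd : G.dist i u = k + 1)
    (h1 : G.Adj w1 u) (hr1 : G.Reachable i w1) (hd1 : G.dist i w1 = k)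
    (h2 : G.Adj w2 u) (hr2 : G.Reachable i w2) (hd2 : G.dist i w2 = k) :
    w1 = w2 := by
  by_contra hne
  obtain ⟨P1, hP1, hP1l⟩ := exists_path_length_dist hr1
  obtain ⟨P2, hP2, hP2l⟩ := exists_path_length_dist hr2
  have hu1 : u ∉ P1.support := by
    intro hmem
    have := P1.length_takeUntil_le hmem
    have hle := SimpleGraph.dist_le (P1.takeUntil u hmem)
    omega
  have hu2 : u ∉ P2.support := by
    intro hmem
    have := P2.length_takeUntil_le hmem
    have hle := SimpleGraph.dist_le (P2.takeUntil u hmem)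
    omega
  have hQ1 : (P1.concat h1).IsPath := isPath_concat hP1 h1 hu1
  have hQ2 : (P2.concat h2).IsPath := isPath_concat hP2 h2 hu2
  have heq : P1.concat h1 = P2.concat h2 := by
    apply path_eq_of_short hcyc hQ1 hQ2
    rw [Walk.length_concat, Walk.length_concat, hP1l, hP2l, hd1, hd2]
    omega
  have hedges := congrArg Walk.edges heq
  rw [Walk.edges_concat, Walk.edges_concat] at hedges
  have hlen' : P1.edges.length = P2.edges.length := by
    rw [Walk.length_edges, Walk.length_edges, hP1l, hP2l, hd1, hd2]
  rw [List.concat_eq_append, List.concat_eq_append] at hedges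
  have := (List.append_inj hedges hlen').2
  rw [List.cons_eq_cons] at this
  have hs : s(w1, u) = s(w2, u) := this.1
  rw [Sym2.eq_iff] at hs
  rcases hs with ⟨rfl, _⟩ | ⟨rfl, rfl⟩
  · exact hne rfl
  · exact G.irrefl h1

include hcyc in
lemma no_same_level {i u w : V} {k : ℕ} (hk : k ≤ S)
    (hru : G.Reachable i u) (hrw : G.Reachable i w)
    (hdu : G.dist i u = k) (hdw : G.dist i w = k) (hadj : G.Adj u w) : False := by
  obtain ⟨Pu, hPu, hPul⟩ := exists_path_length_dist hru
  obtain ⟨Pw, hPw, hPwl⟩ := exists_path_length_dist hrw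
  have huw : u ≠ w := hadj.ne
  have hu : u ∉ Pw.support := by
    intro hmem
    have h1 := Pw.length_takeUntil_le hmem
    have h2 := SimpleGraph.dist_le (Pw.takeUntil u hmem)
    have h3 : (Pw.takeUntil u hmem).length + (Pw.dropUntil u hmem).length = Pw.length := by
      rw [← Walk.length_append, Walk.take_spec]
    have h4 : (Pw.dropUntil u hmem).length = 0 := by omega
    exact huw (Walk.eq_of_length_eq_zero h4)
  have hQ : (Pw.concat hadj.symm).IsPath := isPath_concat hPw hadj.symm hu
  have heq : Pu = Pw.concat hadj.symm := by
    apply path_eq_of_short hcyc hPu hQ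
    rw [Walk.length_concat, hPul, hPwl, hdu, hdw]
    omega
  have := congrArg Walk.length heq
  rw [Walk.length_concat, hPul, hPwl, hdu, hdw] at this
  omega

end B

section C
variable {V : Type*} [Fintype V] [DecidableEq V] {G : SimpleGraph V} [DecidableRel G.Adj]
  {d S : ℕ}

lemma count_step {A B : Finset V} {m : ℕ}
    (hA : ∀ a ∈ A, (B.filter fun b => G.Adj a b).card = m)
    (hB : ∀ b ∈ B, (A.filter fun a => G.Adj a b).card = 1) :
    B.card = m * A.card := by
  have h1 : ∑ b ∈ B, (A.filter fun a => G.Adj a b).card = B.card := by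
    rw [Finset.sum_congr rfl hB]; simp
  have h2 : ∑ a ∈ A, (B.filter fun b => G.Adj a b).card = m * A.card := by
    rw [Finset.sum_congr rfl hA]; simp [mul_comm]
  have h3 : ∑ b ∈ B, (A.filter fun a => G.Adj a b).card
      = ∑ a ∈ A, (B.filter fun b => G.Adj a b).card := by
    simp_rw [Finset.card_filter]
    exact Finset.sum_comm
  omega

variable (hcyc : ∀ ⦃c : V⦄ (w : G.Walk c c), w.IsCycle → 2 * S + 1 < w.length)
  (hreg : G.IsRegularOfDegree d) (hd : 3 ≤ d)

include hcyc in
lemma parents_card_one {i b : V} {k : ℕ} (hkS : k + 1 ≤ S)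
    (hb : G.Reachable i b) (hdb : G.dist i b = k + 1) (F : Finset V)
    (hF : ∀ x, x ∈ F ↔ (G.Adj x b ∧ G.Reachable i x ∧ G.dist i x = k)) :
    F.card = 1 := by
  obtain ⟨w0, h0adj, h0r, h0d⟩ := parent_exists hb hdb
  rw [Finset.card_eq_one]
  refine ⟨w0, ?_⟩
  ext a
  rw [hF a, Finset.mem_singleton]
  constructor
  · rintro ⟨hadj, hra, hda⟩
    exact parent_unique hcyc hkS hdb hadj hra hda h0adj h0r h0d
  · rintro rfl
    exact ⟨h0adj, h0r, h0d⟩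

include hcyc hreg in
lemma neighbor_count_up {i a : V} {k : ℕ} (hk : 1 ≤ k) (hkS : k + 1 ≤ S)
    (ha : G.Reachable i a) (hda : G.dist i a = k) :
    ((G.neighborFinset a).filter fun w => G.dist i w = k + 1).card = d - 1 := by
  obtain ⟨m, rfl⟩ : ∃ m, k = m + 1 := ⟨k - 1, by omega⟩
  have hnb : ∀ w ∈ G.neighborFinset a, G.Reachable i w := fun w hw =>
    ha.trans ((SimpleGraph.mem_neighborFinset _ _ _).mp hw).reachable
  have hbound : ∀ w ∈ G.neighborFinset a, G.dist i w = m ∨ G.dist i w = m + 2 := by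
    intro w hw
    have hadj : G.Adj a w := (SimpleGraph.mem_neighborFinset _ _ _).mp hw
    have h1 : G.dist i w ≤ m + 2 := by
      have := dist_step ha hadj; omega
    have h2 : m ≤ G.dist i w := by
      have := dist_step (hnb w hw) hadj.symm; omega
    have h3 : G.dist i w ≠ m + 1 := fun h =>
      no_same_level hcyc (show m + 1 ≤ S by omega) ha (hnb w hw) hda h hadj
    omega
  have hparent : ((G.neighborFinset a).filter fun w => G.dist i w = m).card = 1 := by
    apply parents_card_one hcyc (show m + 1 ≤ S by omega) ha hda
    intro x
    simp only [Finset.mem_filter, SimpleGraph.mem_neighborFinset]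
    constructor
    · rintro ⟨hadj, hdx⟩
      exact ⟨hadj.symm, ha.trans hadj.reachable, hdx⟩
    · rintro ⟨hadj, _, hdx⟩
      exact ⟨hadj.symm, hdx⟩
  have hsplit := Finset.card_filter_add_card_filter_not
    (s := G.neighborFinset a) (p := fun w => G.dist i w = m)
  have hne : (G.neighborFinset a).filter (fun w => ¬ G.dist i w = m)
      = (G.neighborFinset a).filter (fun w => G.dist i w = m + 1 + 1) := by
    apply Finset.filter_congr
    intro w hw
    rcases hbound w hw with h | h <;> simp [h] <;> omega
  rw [hne] at hsplit
  have hdeg : (G.neighborFinset a).card = d := hreg a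
  omega

include hcyc hreg in
lemma sphere_card {i : V} : ∀ k : ℕ, 1 ≤ k → k ≤ S →
    (Finset.univ.filter fun u => G.Reachable i u ∧ G.dist i u = k).card
      = d * (d - 1) ^ (k - 1) := by
  intro k
  induction k with
  | zero => omega
  | succ k ihk =>
    intro _ hkS
    rcases Nat.eq_zero_or_pos k with rfl | hkpos
    · -- sphere of radius 1 is the neighbor finset
      have : (Finset.univ.filter fun u => G.Reachable i u ∧ G.dist i u = 1)
          = G.neighborFinset i := by
        ext u
        simp only [Finset.mem_filter, Finset.mem_univ, true_and,
          SimpleGraph.mem_neighborFinset]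
        constructor
        · rintro ⟨hr, hd1⟩
          exact SimpleGraph.dist_eq_one_iff_adj.mp hd1
        · intro h
          exact ⟨h.reachable, SimpleGraph.dist_eq_one_iff_adj.mpr h⟩
      rw [this]
      have hdeg : (G.neighborFinset i).card = d := hreg i
      rw [hdeg]
      simp
    · have hcard := ihk hkpos (by omega)
      have hstep : (Finset.univ.filter fun u => G.Reachable i u ∧ G.dist i u = k + 1).card
          = (d - 1) * (Finset.univ.filter fun u => G.Reachable i u ∧ G.dist i u = k).card := by
        refine count_step (G := G) ?_ ?_
        · intro a hmem
          rw [Finset.mem_filter] at hmem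
          obtain ⟨-, hra, hda⟩ := hmem
          have heq : ((Finset.univ.filter fun u => G.Reachable i u ∧ G.dist i u = k + 1).filter
              fun b => G.Adj a b) = (G.neighborFinset a).filter fun w => G.dist i w = k + 1 := by
            ext w
            simp only [Finset.mem_filter, Finset.mem_univ, true_and,
              SimpleGraph.mem_neighborFinset]
            constructor
            · rintro ⟨⟨hr, hdw⟩, hadj⟩
              exact ⟨hadj, hdw⟩
            · rintro ⟨hadj, hdw⟩
              exact ⟨⟨hra.trans hadj.reachable, hdw⟩, hadj⟩
          rw [heq]
          exact neighbor_count_up hcyc hreg hkpos hkS hra hda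
        · intro b hmem
          rw [Finset.mem_filter] at hmem
          obtain ⟨-, hrb, hdb⟩ := hmem
          apply parents_card_one hcyc hkS hrb hdb
          intro x
          simp only [Finset.mem_filter, Finset.mem_univ, true_and]
          tauto
      rw [hstep, hcard]
      have hk1 : k - 1 + 1 = k := by omega
      calc (d - 1) * (d * (d - 1) ^ (k - 1)) = d * ((d - 1) ^ (k - 1) * (d - 1)) := by ring
      _ = d * (d - 1) ^ (k - 1 + 1) := by rw [pow_succ]
      _ = d * (d - 1) ^ (k + 1 - 1) := by rw [hk1]; simp

include hcyc hreg in
lemma ball_card {i : V} :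
    (Finset.univ.filter fun u => G.Reachable i u ∧ G.dist i u ≤ S).card
      = 1 + ∑ k ∈ Finset.range S, d * (d - 1) ^ k := by
  have hsplit : (Finset.univ.filter fun u => G.Reachable i u ∧ G.dist i u ≤ S)
      = (Finset.range (S + 1)).biUnion
        (fun k => Finset.univ.filter fun u => G.Reachable i u ∧ G.dist i u = k) := by
    ext u
    simp only [Finset.mem_filter, Finset.mem_univ, true_and, Finset.mem_biUnion,
      Finset.mem_range]
    constructor
    · rintro ⟨hr, hle⟩
      exact ⟨G.dist i u, by omega, hr, rfl⟩
    · rintro ⟨k, hk, hr, hdk⟩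
      exact ⟨hr, by omega⟩
  rw [hsplit, Finset.card_biUnion]
  · rw [Finset.sum_range_succ']
    have hzero : (Finset.univ.filter fun u => G.Reachable i u ∧ G.dist i u = 0) = {i} := by
      ext u
      simp only [Finset.mem_filter, Finset.mem_univ, true_and, Finset.mem_singleton]
      constructor
      · rintro ⟨hr, h0⟩
        exact (hr.dist_eq_zero_iff.mp h0).symm
      · rintro rfl
        exact ⟨SimpleGraph.Reachable.refl u, SimpleGraph.dist_self⟩
    rw [hzero]
    simp only [Finset.card_singleton]
    rw [add_comm]
    congr 1
    apply Finset.sum_congr rfl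
    intro k hk
    rw [Finset.mem_range] at hk
    show (Finset.univ.filter fun u => G.Reachable i u ∧ G.dist i u = k + 1).card = _
    rw [sphere_card hcyc hreg (k + 1) (by omega) (by omega)]
    simp
  · intro x _ y _ hxy
    apply Finset.disjoint_left.mpr
    intro u hux huy
    rw [Finset.mem_filter] at hux huy
    exact hxy (by rw [← hux.2.2, ← huy.2.2])

end C

section D
variable {V : Type*} [Fintype V] [DecidableEq V] {G : SimpleGraph V} [DecidableRel G.Adj]
  {d S : ℕ}
variable (hcyc : ∀ ⦃c : V⦄ (w : G.Walk c c), w.IsCycle → 2 * S + 1 < w.length)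
  (hreg : G.IsRegularOfDegree d) (hd : 3 ≤ d)

include hcyc hreg in
lemma D_succ {i j : V} (hij : G.Adj i j) {k : ℕ} (hkS : k + 1 ≤ S) :
    (Finset.univ.filter fun u => G.Reachable i u ∧ G.dist i u = k + 1 ∧ G.dist j u = (k + 1) + 1).card
      = (d - 1) *
      (Finset.univ.filter fun u => G.Reachable i u ∧ G.dist i u = k ∧ G.dist j u = k + 1).card := by
  have hrji : G.Reachable j i := hij.symm.reachable
  have hdji : G.dist j i = 1 := SimpleGraph.dist_eq_one_iff_adj.mpr hij.symm
  refine count_step (G := G) ?_ ?_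
  · -- every vertex of D_k has d - 1 neighbours in D_{k+1}
    intro a hmem
    rw [Finset.mem_filter] at hmem
    obtain ⟨-, hra, hda, hdja⟩ := hmem
    rcases Nat.eq_zero_or_pos k with rfl | hkpos
    · -- base level : a = i
      have ha : a = i := (hra.dist_eq_zero_iff.mp hda).symm
      subst ha
      have heq : ((Finset.univ.filter fun u =>
            G.Reachable a u ∧ G.dist a u = 0 + 1 ∧ G.dist j u = (0 + 1) + 1).filter
            fun b => G.Adj a b) = (G.neighborFinset a).erase j := by
        ext b
        simp only [Finset.mem_filter, Finset.mem_univ, true_and, Finset.mem_erase,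
          SimpleGraph.mem_neighborFinset]
        constructor
        · rintro ⟨⟨hrb, hdb, hdjb⟩, hadj⟩
          refine ⟨fun hbj => ?_, hadj⟩
          subst hbj
          rw [SimpleGraph.dist_self] at hdjb
          omega
        · rintro ⟨hbj, hadj⟩
          have hrb : G.Reachable a b := hadj.reachable
          have hdb : G.dist a b = 1 := SimpleGraph.dist_eq_one_iff_adj.mpr hadj
          refine ⟨⟨hrb, hdb, ?_⟩, hadj⟩
          have hub : G.dist j b ≤ 2 := by
            have := dist_tri hrji hrb
            omega
          have hne0 : G.dist j b ≠ 0 := by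
            intro h0
            exact hbj ((hrji.trans hrb).dist_eq_zero_iff.mp h0).symm
          have hne1 : G.dist j b ≠ 1 := by
            intro h1
            have hadjjb : G.Adj j b := SimpleGraph.dist_eq_one_iff_adj.mp h1
            exact no_same_level hcyc (show 1 ≤ S by omega) hij.reachable hrb
              (SimpleGraph.dist_eq_one_iff_adj.mpr hij) hdb hadjjb
          omega
      have hdeg : (G.neighborFinset a).card = d := hreg a
      rw [heq, Finset.card_erase_of_mem ((SimpleGraph.mem_neighborFinset _ _ _).mpr hij), hdeg]
    · -- higher levels
      have heq : ((Finset.univ.filter fun u =>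
            G.Reachable i u ∧ G.dist i u = k + 1 ∧ G.dist j u = (k + 1) + 1).filter
            fun b => G.Adj a b) = (G.neighborFinset a).filter fun w => G.dist i w = k + 1 := by
        ext w
        simp only [Finset.mem_filter, Finset.mem_univ, true_and,
          SimpleGraph.mem_neighborFinset]
        constructor
        · rintro ⟨⟨hr, hdi, hdj⟩, hadj⟩
          exact ⟨hadj, hdi⟩
        · rintro ⟨hadj, hdw⟩
          have hrw : G.Reachable i w := hra.trans hadj.reachable
          have hrja : G.Reachable j a := hrji.trans hra
          have hrjw : G.Reachable j w := hrji.trans hrw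
          refine ⟨⟨hrw, hdw, ?_⟩, hadj⟩
          have hub : G.dist j w ≤ k + 2 := by
            have := dist_step hrja hadj
            omega
          have hlb : k ≤ G.dist j w := by
            have := dist_step hrjw hadj.symm
            omega
          have hne1 : G.dist j w ≠ k + 1 := by
            intro h1
            exact no_same_level hcyc hkS hrja hrjw hdja h1 hadj
          have hnek : G.dist j w ≠ k := by
            intro hk0
            obtain ⟨p, hpadj, hrp, hdp⟩ := parent_exists hra (by omega : G.dist i a = (k - 1) + 1)
            have hrjp : G.Reachable j p := hrji.trans hrp
            have hdjp : G.dist j p = k := by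
              have h1 : G.dist j p ≤ 1 + (k - 1) := by
                have := dist_tri hrji hrp
                omega
              have h2 : G.dist j a ≤ G.dist j p + 1 := dist_step hrjp hpadj
              omega
            have hwp : w = p := parent_unique hcyc hkS hdja hadj.symm hrjw hk0 hpadj hrjp hdjp
            subst hwp
            have : G.dist i w = k - 1 := hdp
            omega
          omega
      rw [heq]
      exact neighbor_count_up hcyc hreg hkpos hkS hra hda
  · -- every vertex of D_{k+1} has exactly one neighbour in D_k
    intro b hmem
    rw [Finset.mem_filter] at hmem
    obtain ⟨-, hrb, hdb, hdjb⟩ := hmem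
    apply parents_card_one hcyc hkS hrb hdb
    intro x
    simp only [Finset.mem_filter, Finset.mem_univ, true_and]
    constructor
    · rintro ⟨⟨hrx, hdx, hdjx⟩, hadj⟩
      exact ⟨hadj, hrx, hdx⟩
    · rintro ⟨hadj, hrx, hdx⟩
      refine ⟨⟨hrx, hdx, ?_⟩, hadj⟩
      have hrjx : G.Reachable j x := hrji.trans hrx
      have h1 : G.dist j x ≤ 1 + k := by
        have := dist_tri hrji hrx
        omega
      have h2 : G.dist j b ≤ G.dist j x + 1 := dist_step hrjx hadj
      omega

include hcyc hreg in
lemma D_card {i j : V} (hij : G.Adj i j) : ∀ k, k ≤ S →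
    (Finset.univ.filter fun u => G.Reachable i u ∧ G.dist i u = k ∧ G.dist j u = k + 1).card
      = (d - 1) ^ k := by
  intro k
  induction k with
  | zero =>
    intro _
    have : (Finset.univ.filter fun u =>
        G.Reachable i u ∧ G.dist i u = 0 ∧ G.dist j u = 0 + 1) = {i} := by
      ext u
      simp only [Finset.mem_filter, Finset.mem_univ, true_and, Finset.mem_singleton]
      constructor
      · rintro ⟨hr, h0, -⟩
        exact (hr.dist_eq_zero_iff.mp h0).symm
      · rintro rfl
        exact ⟨SimpleGraph.Reachable.refl u, SimpleGraph.dist_self,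
          SimpleGraph.dist_eq_one_iff_adj.mpr hij.symm⟩
    rw [this]
    simp
  | succ k ih =>
    intro hkS
    rw [D_succ hcyc hreg hij hkS, ih (by omega), pow_succ]
    ring

end D

end Stmt12Aux


/-- For a `d`-regular graph (`d ≥ 3`) of girth `c` and `S` with `2S+1 < c`, the
uniform probability measures `ξ_i` on the balls `B(i,S)` have variation
`2(d−1)^S(2−d)/(2 − d(d−1)^S)` on every edge; consequently the minimal variation
`ε_{S,G}` of probability measures at scale `S` is at most
`2(d−1)^S(d−2)/(d(d−1)^S − 2)`. -/
theorem stmt12 {V : Type*} [Fintype V] [DecidableEq V]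
    (G : SimpleGraph V) [DecidableRel G.Adj]
    (d S : ℕ) (hd : 3 ≤ d) (hreg : G.IsRegularOfDegree d)
    (hgirth : ((2 * S + 1 : ℕ) : ℕ∞) < G.girth)
    (ξ : V → V → ℝ)
    (hξ : ∀ v u, ξ v u = if G.Reachable v u ∧ G.dist v u ≤ S then
        (1 : ℝ) / ((Finset.univ.filter fun w => G.Reachable v w ∧ G.dist v w ≤ S).card : ℝ)
      else 0) :
    (∀ i j : V, G.Adj i j →
      ∑ u, |ξ i u - ξ j u|
        = 2 * ((d : ℝ) - 1) ^ S * (2 - (d : ℝ)) / (2 - d * ((d : ℝ) - 1) ^ S))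
    ∧ sInf {ε : ℝ | ∃ ζ : V → V → ℝ,
        (∀ i u, 0 ≤ ζ i u) ∧ (∀ i, ∑ u, ζ i u = 1) ∧
        (∀ i u, ζ i u ≠ 0 → G.Reachable i u ∧ G.dist i u ≤ S) ∧
        (∀ i j : V, G.Adj i j → ∑ u, |ζ i u - ζ j u| ≤ ε)}
      ≤ 2 * ((d : ℝ) - 1) ^ S * ((d : ℝ) - 2) / ((d : ℝ) * ((d : ℝ) - 1) ^ S - 2) := by
  -- every cycle is longer than `2S+1`
  have hcyc : ∀ ⦃c : V⦄ (w : G.Walk c c), w.IsCycle → 2 * S + 1 < w.length := by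
    intro c w hw
    have h1 : G.egirth ≤ (w.length : ℕ∞) := SimpleGraph.le_egirth.mp le_rfl c w hw
    have h2 : G.egirth ≠ ⊤ := by
      intro h
      have : G.girth = 0 := by simp [SimpleGraph.girth, h]
      rw [this] at hgirth
      simp at hgirth
    have h3 : (G.girth : ℕ∞) = G.egirth := ENat.coe_toNat h2
    rw [h3] at hgirth
    have h4 : ((2 * S + 1 : ℕ) : ℕ∞) < (w.length : ℕ∞) := lt_of_lt_of_le hgirth h1
    exact_mod_cast h4
  have hd1 : 1 ≤ d := by omega
  have hcast : ((d - 1 : ℕ) : ℝ) = (d : ℝ) - 1 := by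
    push_cast [Nat.cast_sub hd1]
    ring
  have hd3 : (3 : ℝ) ≤ (d : ℝ) := by exact_mod_cast hd
  -- the cardinality of every ball of radius S
  have hball : ∀ v : V,
      (Finset.univ.filter fun u => G.Reachable v u ∧ G.dist v u ≤ S).card
        = 1 + ∑ k ∈ Finset.range S, d * (d - 1) ^ k :=
    fun v => Stmt12Aux.ball_card hcyc hreg
  set Nn : ℕ := 1 + ∑ k ∈ Finset.range S, d * (d - 1) ^ k with hNn
  have hNpos : 0 < Nn := by omega
  have hNne : (Nn : ℝ) ≠ 0 := Nat.cast_ne_zero.mpr (by omega)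
  have hNR : (Nn : ℝ) * ((d : ℝ) - 2) = (d : ℝ) * ((d : ℝ) - 1) ^ S - 2 := by
    have hNcast : (Nn : ℝ) = 1 + (d : ℝ) * ∑ k ∈ Finset.range S, ((d : ℝ) - 1) ^ k := by
      rw [hNn]
      push_cast [Nat.cast_sub hd1, Finset.mul_sum]
      ring
    have h' := geom_sum_mul ((d : ℝ) - 1) S
    rw [hNcast]
    linear_combination (d : ℝ) * h'
  have hd2ne : (2 : ℝ) - (d : ℝ) ≠ 0 := by intro h; nlinarith
  -- Part 1
  have main1 : ∀ i j : V, G.Adj i j →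
      ∑ u, |ξ i u - ξ j u|
        = 2 * ((d : ℝ) - 1) ^ S * (2 - (d : ℝ)) / (2 - d * ((d : ℝ) - 1) ^ S) := by
    intro i j hij
    have hxi : ∀ u, ξ i u
        = if G.Reachable i u ∧ G.dist i u ≤ S then 1 / (Nn : ℝ) else 0 := by
      intro u; rw [hξ i u, hball i]
    have hxj : ∀ u, ξ j u
        = if G.Reachable j u ∧ G.dist j u ≤ S then 1 / (Nn : ℝ) else 0 := by
      intro u; rw [hξ j u, hball j]
    have hNnonneg : (0 : ℝ) ≤ 1 / (Nn : ℝ) := by positivity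
    have hpt : ∀ u, |ξ i u - ξ j u|
        = if ((G.Reachable i u ∧ G.dist i u ≤ S) ∧ ¬(G.Reachable j u ∧ G.dist j u ≤ S))
            ∨ ((G.Reachable j u ∧ G.dist j u ≤ S) ∧ ¬(G.Reachable i u ∧ G.dist i u ≤ S))
          then 1 / (Nn : ℝ) else 0 := by
      intro u
      rw [hxi u, hxj u]
      by_cases h1 : G.Reachable i u ∧ G.dist i u ≤ S <;>
        by_cases h2 : G.Reachable j u ∧ G.dist j u ≤ S <;>
        simp [h1, h2, abs_of_nonneg hNnonneg]
    rw [Finset.sum_congr rfl fun u _ => hpt u, ← Finset.sum_filter, Finset.sum_const,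
      nsmul_eq_mul]
    -- identify the symmetric difference with the two "outer sphere" sets
    have hrij : G.Reachable i j := hij.reachable
    have hdij : G.dist i j = 1 := SimpleGraph.dist_eq_one_iff_adj.mpr hij
    have hdji : G.dist j i = 1 := SimpleGraph.dist_eq_one_iff_adj.mpr hij.symm
    have hchar : ∀ (i' j' : V), G.Adj i' j' → ∀ u : V,
        ((G.Reachable i' u ∧ G.dist i' u ≤ S) ∧ ¬(G.Reachable j' u ∧ G.dist j' u ≤ S))
        ↔ (G.Reachable i' u ∧ G.dist i' u = S ∧ G.dist j' u = S + 1) := by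
      intro i' j' h' u
      constructor
      · rintro ⟨⟨hr, hle⟩, hnot⟩
        have hrj : G.Reachable j' u := h'.symm.reachable.trans hr
        have h1 : G.dist j' u ≤ G.dist j' i' + G.dist i' u := Stmt12Aux.dist_tri h'.symm.reachable hr
        have h2 : G.dist i' u ≤ G.dist i' j' + G.dist j' u := Stmt12Aux.dist_tri h'.reachable hrj
        rw [SimpleGraph.dist_eq_one_iff_adj.mpr h'.symm] at h1
        rw [SimpleGraph.dist_eq_one_iff_adj.mpr h'] at h2
        have h3 : ¬ G.dist j' u ≤ S := fun hle' => hnot ⟨hrj, hle'⟩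
        constructor
        · exact hr
        · omega
      · rintro ⟨hr, hdS, hdS1⟩
        refine ⟨⟨hr, by omega⟩, ?_⟩
        rintro ⟨-, hle⟩
        omega
    have hfeq : (Finset.univ.filter fun u =>
          ((G.Reachable i u ∧ G.dist i u ≤ S) ∧ ¬(G.Reachable j u ∧ G.dist j u ≤ S))
          ∨ ((G.Reachable j u ∧ G.dist j u ≤ S) ∧ ¬(G.Reachable i u ∧ G.dist i u ≤ S)))
        = (Finset.univ.filter fun u => G.Reachable i u ∧ G.dist i u = S ∧ G.dist j u = S + 1)
          ∪ (Finset.univ.filter fun u => G.Reachable j u ∧ G.dist j u = S ∧ G.dist i u = S + 1) := by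
      ext u
      simp only [Finset.mem_filter, Finset.mem_univ, true_and, Finset.mem_union]
      rw [hchar i j hij u, hchar j i hij.symm u]
    have hdisj : Disjoint
        (Finset.univ.filter fun u => G.Reachable i u ∧ G.dist i u = S ∧ G.dist j u = S + 1)
        (Finset.univ.filter fun u => G.Reachable j u ∧ G.dist j u = S ∧ G.dist i u = S + 1) := by
      rw [Finset.disjoint_left]
      intro u hu1 hu2
      rw [Finset.mem_filter] at hu1 hu2
      omega
    rw [hfeq, Finset.card_union_of_disjoint hdisj,
      Stmt12Aux.D_card hcyc hreg hij S le_rfl,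
      Stmt12Aux.D_card hcyc hreg hij.symm S le_rfl]
    -- final arithmetic
    have hden : 2 - (d : ℝ) * ((d : ℝ) - 1) ^ S = (Nn : ℝ) * (2 - (d : ℝ)) := by linarith
    rw [hden]
    push_cast [Nat.cast_sub hd1]
    field_simp
    ring
  refine ⟨main1, ?_⟩
  -- Part 2
  have hval : 2 * ((d : ℝ) - 1) ^ S * (2 - (d : ℝ)) / (2 - d * ((d : ℝ) - 1) ^ S)
      = 2 * ((d : ℝ) - 1) ^ S * ((d : ℝ) - 2) / ((d : ℝ) * ((d : ℝ) - 1) ^ S - 2) := by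
    rw [show (2 : ℝ) - (d : ℝ) = -((d : ℝ) - 2) by ring,
      show (2 : ℝ) - (d : ℝ) * ((d : ℝ) - 1) ^ S = -((d : ℝ) * ((d : ℝ) - 1) ^ S - 2) by ring,
      mul_neg, neg_div_neg_eq]
  have hmem : 2 * ((d : ℝ) - 1) ^ S * ((d : ℝ) - 2) / ((d : ℝ) * ((d : ℝ) - 1) ^ S - 2)
      ∈ {ε : ℝ | ∃ ζ : V → V → ℝ,
        (∀ i u, 0 ≤ ζ i u) ∧ (∀ i, ∑ u, ζ i u = 1) ∧
        (∀ i u, ζ i u ≠ 0 → G.Reachable i u ∧ G.dist i u ≤ S) ∧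
        (∀ i j : V, G.Adj i j → ∑ u, |ζ i u - ζ j u| ≤ ε)} := by
    refine ⟨ξ, ?_, ?_, ?_, ?_⟩
    · intro i u
      rw [hξ i u]
      split_ifs
      · positivity
      · exact le_rfl
    · intro i
      have hxi : ∀ u, ξ i u
          = if G.Reachable i u ∧ G.dist i u ≤ S then 1 / (Nn : ℝ) else 0 := by
        intro u; rw [hξ i u, hball i]
      rw [Finset.sum_congr rfl fun u _ => hxi u, ← Finset.sum_filter, Finset.sum_const,
        nsmul_eq_mul, hball i, mul_one_div, div_self hNne]
    · intro i u h
      rw [hξ i u] at h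
      by_contra hn
      rw [if_neg hn] at h
      exact h rfl
    · intro i j hij
      rw [main1 i j hij, hval]
  by_cases hbdd : BddBelow {ε : ℝ | ∃ ζ : V → V → ℝ,
        (∀ i u, 0 ≤ ζ i u) ∧ (∀ i, ∑ u, ζ i u = 1) ∧
        (∀ i u, ζ i u ≠ 0 → G.Reachable i u ∧ G.dist i u ≤ S) ∧
        (∀ i j : V, G.Adj i j → ∑ u, |ζ i u - ζ j u| ≤ ε)}
  · exact csInf_le hbdd hmem
  · rw [Real.sInf_of_not_bddBelow hbdd]
    have h1 : (1 : ℝ) ≤ ((d : ℝ) - 1) ^ S := one_le_pow₀ (by linarith)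
    apply div_nonneg
    · nlinarith
    · nlinarith
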